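/- Let a 3×3 real symmetric matrix X with sparsity pattern X₁₃ = X₃₁ = 0 be positive semidefinite and suppose X₂₂ > 0. Then there exist 2×2 positive semidefinite matrices S₁, S₂ such that X = E₁ᵀS₁E₁ + E₂ᵀS₂E₂, where E₁, E₂ select the index sets {1,2} and {2,3} respectively. -/

import Mathlib

open Matrix

lemma psd2 (p q r : ℝ) (hp : 0 ≤ p) (hr : 0 ≤ r) (h : q ^ 2 ≤ p * r) :
    (!![p, q; q, r] : Matrix (Fin 2) (Fin 2) ℝ).PosSemidef := by
  refine Matrix.PosSemidef.of_dotProduct_mulVec_nonneg ?_ ?_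
  · ext i j
    fin_cases i <;> fin_cases j <;> simp [Matrix.conjTranspose, Matrix.vecHead, Matrix.vecTail]
  · intro x
    have hform : (star x ⬝ᵥ (!![p, q; q, r] : Matrix (Fin 2) (Fin 2) ℝ).mulVec x) =
        p * x 0 ^ 2 + 2 * q * (x 0 * x 1) + r * x 1 ^ 2 := by
      simp [dotProduct, Matrix.mulVec, Fin.sum_univ_two]
      ring
    rw [hform]
    rcases hp.eq_or_lt with hp0 | hp0
    · have hq : q = 0 := by nlinarith
      rw [← hp0, hq]
      nlinarith [sq_nonneg (x 1)]
    · nlinarith [sq_nonneg (p * x 0 + q * x 1),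
        mul_nonneg (mul_nonneg (sub_nonneg.2 h) (sq_nonneg (x 1))) hp0.le]

theorem stmt_16 (X : Matrix (Fin 3) (Fin 3) ℝ) (hX : X.PosSemidef)
    (hX13 : X 0 2 = 0) (hX31 : X 2 0 = 0) (hX22 : 0 < X 1 1) :
    ∃ S₁ S₂ : Matrix (Fin 2) (Fin 2) ℝ, S₁.PosSemidef ∧ S₂.PosSemidef ∧
      X = (!![1, 0, 0; 0, 1, 0] : Matrix (Fin 2) (Fin 3) ℝ)ᵀ * S₁ *
            (!![1, 0, 0; 0, 1, 0] : Matrix (Fin 2) (Fin 3) ℝ) +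
          (!![0, 1, 0; 0, 0, 1] : Matrix (Fin 2) (Fin 3) ℝ)ᵀ * S₂ *
            (!![0, 1, 0; 0, 0, 1] : Matrix (Fin 2) (Fin 3) ℝ) := by
  have hsym10 : X 1 0 = X 0 1 := by
    have := congrFun (congrFun hX.1 1) 0
    simpa using this.symm
  have hsym21 : X 2 1 = X 1 2 := by
    have := congrFun (congrFun hX.1 2) 1
    simpa using this.symm
  set a := X 0 0 with ha
  set b := X 0 1 with hb
  set c := X 1 1 with hc
  set d := X 1 2 with hd
  set e := X 2 2 with he
  have ha0 : 0 ≤ a := by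
    have := hX.dotProduct_mulVec_nonneg (fun i => if i = 0 then 1 else 0)
    simpa [dotProduct, Matrix.mulVec, Fin.sum_univ_three, ha] using this
  have he0 : 0 ≤ e := by
    have := hX.dotProduct_mulVec_nonneg (fun i => if i = 2 then 1 else 0)
    simpa [dotProduct, Matrix.mulVec, Fin.sum_univ_three, he] using this
  have hac : b ^ 2 ≤ a * c := by
    have h := hX.dotProduct_mulVec_nonneg (fun i => if i = 0 then c else if i = 1 then -b else 0)
    simp [dotProduct, Matrix.mulVec, Fin.sum_univ_three, hsym10, hsym21] at h
    nlinarith [h, hX22]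
  have hce : d ^ 2 ≤ c * e := by
    have h := hX.dotProduct_mulVec_nonneg (fun i => if i = 1 then d else if i = 2 then -c else 0)
    simp [dotProduct, Matrix.mulVec, Fin.sum_univ_three, hsym10, hsym21] at h
    nlinarith [h, hX22]
  rcases ha0.eq_or_lt with ha0' | ha0'
  · -- a = 0, hence b = 0
    have hb0 : b = 0 := by nlinarith
    refine ⟨0, !![c, d; d, e], Matrix.PosSemidef.zero,
      psd2 c d e hX22.le he0 hce, ?_⟩
    ext i j
    fin_cases i <;> fin_cases j <;>
      simp [Matrix.mul_apply, Fin.sum_univ_two, Fin.sum_univ_three, ← ha0', hb0,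
        hX13, hX31, hsym10, hsym21, ← ha, ← hb, ← hc, ← hd, ← he,
        Matrix.vecHead, Matrix.vecTail]
  · -- a > 0
    have hdet : 0 ≤ a * (c * e - d ^ 2) - b ^ 2 * e := by
      rcases he0.eq_or_lt with he0' | he0'
      · have hd0 : d = 0 := by nlinarith
        rw [← he0', hd0]; norm_num
      · have h := hX.dotProduct_mulVec_nonneg (fun i => if i = 0 then b * e else if i = 1 then -(a * e) else a * d)
        simp [dotProduct, Matrix.mulVec, Fin.sum_univ_three, hsym10, hsym21, hX13, hX31] at h
        nlinarith [h, mul_pos ha0' he0']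
    refine ⟨!![a, b; b, b ^ 2 / a], !![c - b ^ 2 / a, d; d, e], ?_, ?_, ?_⟩
    · apply psd2 _ _ _ ha0'.le (by positivity)
      rw [mul_div_cancel₀ _ (ne_of_gt ha0')]
    · apply psd2 _ _ _ (by rw [sub_nonneg, div_le_iff₀ ha0']; nlinarith) he0
      rw [sub_mul, div_mul_eq_mul_div, le_sub_iff_add_le, ← sub_nonneg]
      have : c * e - (d ^ 2 + b ^ 2 * e / a) = (a * (c * e - d ^ 2) - b ^ 2 * e) / a := by
        field_simp; ring
      rw [this]
      positivity
    · ext i j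
      fin_cases i <;> fin_cases j <;>
        simp [Matrix.mul_apply, Fin.sum_univ_two, Fin.sum_univ_three,
          hX13, hX31, hsym10, hsym21, ← ha, ← hb, ← hc, ← hd, ← he,
          Matrix.vecHead, Matrix.vecTail] <;> field_simp <;> ring
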